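/- Let G be the complete graph on p ≥ 4 vertices with two edges removed, where the two removed edges do not share a vertex, or share a vertex (both cases, provided the resulting graph is chordal). For the chordal cases, the number of moral acyclic orientations of G equals (p² − p − 4)·(p−3)!. -/

import Mathlib

/-- A chord of a closed walk: an edge of `G` between two vertices of the walk
that is not an edge of the walk. -/
def SimpleGraph.Walk.HasChord {V : Type*} {G : SimpleGraph V} {v : V}
    (c : G.Walk v v) : Prop :=
  ∃ a b, a ∈ c.support ∧ b ∈ c.support ∧ G.Adj a b ∧ s(a, b) ∉ c.edges

/-- A graph is chordal if every cycle with four or more vertices has a chord. -/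
def SimpleGraph.IsChordalGraph {V : Type*} (G : SimpleGraph V) : Prop :=
  ∀ (v : V) (c : G.Walk v v), c.IsCycle → 4 ≤ c.length → c.HasChord

/-- A vertex is dominating if it is adjacent to every other vertex. -/
def SimpleGraph.IsDominatingVertex {V : Type*} (G : SimpleGraph V) (v : V) : Prop :=
  ∀ w, w ≠ v → G.Adj v w

/-- `D` is an orientation of `G`: each edge gets exactly one direction. -/
def SimpleGraph.IsOrientation {V : Type*} (G : SimpleGraph V) (D : V → V → Prop) : Prop :=
  (∀ a b, G.Adj a b ↔ (D a b ∨ D b a)) ∧ ∀ a b, ¬(D a b ∧ D b a)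

/-- An orientation (directed relation) is acyclic if it has no directed cycle. -/
def IsAcyclicRel {V : Type*} (D : V → V → Prop) : Prop :=
  ∀ a, ¬ Relation.TransGen D a a

/-- An orientation is moral (w.r.t. `G`) if it contains no v-structure. -/
def SimpleGraph.IsMoralOrient {V : Type*} (G : SimpleGraph V) (D : V → V → Prop) : Prop :=
  ∀ a b c, D a c → D b c → a ≠ b → G.Adj a b

/-- The number of moral acyclic orientations of `G`. -/
noncomputable def moralAcyclicCount {V : Type*} (G : SimpleGraph V) : ℕ :=
  Set.ncard {D : V → V → Prop |
    G.IsOrientation D ∧ IsAcyclicRel D ∧ G.IsMoralOrient D}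

/-- Join of two graphs: all edges of each plus all edges across. -/
def joinGraph {V1 V2 : Type*} (G1 : SimpleGraph V1) (G2 : SimpleGraph V2) :
    SimpleGraph (V1 ⊕ V2) where
  Adj x y := match x, y with
    | .inl a, .inl b => G1.Adj a b
    | .inr a, .inr b => G2.Adj a b
    | .inl _, .inr _ => True
    | .inr _, .inl _ => True
  symm := ⟨by rintro (a | a) (b | b) h <;> simp_all [SimpleGraph.adj_comm]⟩
  loopless := ⟨by rintro (a | a) h <;> simp_all⟩

/-- Disjoint union of two graphs. -/
def sumGraph {V1 V2 : Type*} (G1 : SimpleGraph V1) (G2 : SimpleGraph V2) :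
    SimpleGraph (V1 ⊕ V2) where
  Adj x y := match x, y with
    | .inl a, .inl b => G1.Adj a b
    | .inr a, .inr b => G2.Adj a b
    | _, _ => False
  symm := ⟨by rintro (a | a) (b | b) h <;> simp_all [SimpleGraph.adj_comm]⟩
  loopless := ⟨by rintro (a | a) h <;> simp_all⟩


open SimpleGraph

variable {p : ℕ}

def Gm (x y z : Fin p) : SimpleGraph (Fin p) :=
  (⊤ : SimpleGraph (Fin p)) \ SimpleGraph.fromEdgeSet {s(x, y), s(x, z)}

lemma Gm_adj (x y z : Fin p) (u v : Fin p) :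
    (Gm x y z).Adj u v ↔ u ≠ v ∧ ¬(u = x ∧ v = y) ∧ ¬(u = y ∧ v = x)
      ∧ ¬(u = x ∧ v = z) ∧ ¬(u = z ∧ v = x) := by
  simp only [Gm, SimpleGraph.sdiff_adj, SimpleGraph.top_adj, SimpleGraph.fromEdgeSet_adj,
    Set.mem_insert_iff, Set.mem_singleton_iff, Sym2.eq_iff]
  tauto

lemma Gm_adj_of (x y z : Fin p) {u v : Fin p} (huv : u ≠ v) (hu : u ≠ x) (hv : v ≠ x) :
    (Gm x y z).Adj u v := by
  rw [Gm_adj]; exact ⟨huv, fun h => hu h.1, fun h => hv h.2, fun h => hu h.1, fun h => hv h.2⟩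

lemma Gm_adj_x (x y z : Fin p) {v : Fin p} (h1 : v ≠ x) (h2 : v ≠ y) (h3 : v ≠ z) :
    (Gm x y z).Adj x v := by
  rw [Gm_adj]
  exact ⟨fun h => h1 h.symm, fun h => h2 h.2, fun h => h1 h.2, fun h => h3 h.2,
    fun h => h1 h.2⟩

lemma Gm_not_adj_xy (x y z : Fin p) : ¬ (Gm x y z).Adj x y := by
  rw [Gm_adj]; tauto

lemma Gm_not_adj_xz (x y z : Fin p) : ¬ (Gm x y z).Adj x z := by
  rw [Gm_adj]; tauto

abbrev Svtx (x : Fin p) := {v : Fin p // v ≠ x}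
abbrev Nvtx (x y z : Fin p) := {v : Fin p // v ≠ x ∧ v ≠ y ∧ v ≠ z}

def Tgt (x y z : Fin p) : Type :=
  (Svtx x ≃ Fin (p - 1)) ⊕ (Bool × (Nvtx x y z ≃ Fin (p - 3)) × Fin (p - 3))

noncomputable instance (x y z : Fin p) : Fintype (Tgt x y z) := by
  classical
  exact inferInstanceAs (Fintype ((Svtx x ≃ Fin (p - 1)) ⊕
    (Bool × (Nvtx x y z ≃ Fin (p - 3)) × Fin (p - 3))))

/-- rank function -/
def rk (x y z : Fin p) : Tgt x y z → Fin p → ℕ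
  | .inl e, v => if h : v = x then 2 * p else 2 * (e ⟨v, h⟩).val
  | .inr (s, f, k), v =>
      if v = x then 2 * k.val + 1
      else if v = y then (if s then 2 * p else 2 * p + 2)
      else if v = z then (if s then 2 * p + 2 else 2 * p)
      else if h : v ≠ x ∧ v ≠ y ∧ v ≠ z then 2 * (f ⟨v, h⟩).val + 2 else 0

section rkval
variable {x y z : Fin p} (e : Svtx x ≃ Fin (p - 1)) (s : Bool)
  (f : Nvtx x y z ≃ Fin (p - 3)) (k : Fin (p - 3))

lemma rk_inl_x : rk x y z (.inl e) x = 2 * p := by simp [rk]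

lemma rk_inl_S {v : Fin p} (h : v ≠ x) : rk x y z (.inl e) v = 2 * (e ⟨v, h⟩).val := by
  simp [rk, h]

lemma rk_inr_x : rk x y z (.inr (s, f, k)) x = 2 * k.val + 1 := by simp [rk]

lemma rk_inr_y (hxy : x ≠ y) :
    rk x y z (.inr (s, f, k)) y = (if s then 2 * p else 2 * p + 2) := by
  simp [rk, hxy.symm]

lemma rk_inr_z (hxz : x ≠ z) (hyz : y ≠ z) :
    rk x y z (.inr (s, f, k)) z = (if s then 2 * p + 2 else 2 * p) := by
  simp [rk, hxz.symm, hyz.symm]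

lemma rk_inr_N {v : Fin p} (h : v ≠ x ∧ v ≠ y ∧ v ≠ z) :
    rk x y z (.inr (s, f, k)) v = 2 * (f ⟨v, h⟩).val + 2 := by
  simp [rk, h.1, h.2.1, h.2.2, h]

end rkval

def Psi (x y z : Fin p) (t : Tgt x y z) : Fin p → Fin p → Prop :=
  fun u v => (Gm x y z).Adj u v ∧ rk x y z t u < rk x y z t v

/-- case split on vertex classes -/
lemma vtx_cases (x y z : Fin p) (u : Fin p) :
    u = x ∨ u = y ∨ u = z ∨ (u ≠ x ∧ u ≠ y ∧ u ≠ z) := by tauto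

lemma rk_inj {x y z : Fin p} (hxy : x ≠ y) (hxz : x ≠ z) (hyz : y ≠ z) (t : Tgt x y z) :
    Function.Injective (rk x y z t) := by
  intro u v h
  rcases t with e | ⟨s, f, k⟩
  · rcases eq_or_ne u x with hu | hu <;> rcases eq_or_ne v x with hv | hv
    · rw [hu, hv]
    · rw [hu, rk_inl_x, rk_inl_S e hv] at h; have := (e ⟨v, hv⟩).isLt; omega
    · rw [hv, rk_inl_x, rk_inl_S e hu] at h; have := (e ⟨u, hu⟩).isLt; omega
    · rw [rk_inl_S e hu, rk_inl_S e hv] at h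
      have : (⟨u, hu⟩ : Svtx x) = ⟨v, hv⟩ := e.injective (Fin.val_injective (by omega))
      exact congrArg Subtype.val this
  · have hk : k.val < p - 3 := k.isLt
    rcases vtx_cases x y z u with hu | hu | hu | hu <;>
      rcases vtx_cases x y z v with hv | hv | hv | hv
    · rw [hu, hv]
    · exfalso
      rw [hu, rk_inr_x s f k, hv, rk_inr_y s f k hxy] at h
      rcases s <;> simp at h <;> omega
    · exfalso
      rw [hu, rk_inr_x s f k, hv, rk_inr_z s f k hxz hyz] at h
      rcases s <;> simp at h <;> omega
    · exfalso
      rw [hu, rk_inr_x s f k, rk_inr_N s f k hv] at h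
      have := (f ⟨v, hv⟩).isLt
      omega
    · exfalso
      rw [hu, rk_inr_y s f k hxy, hv, rk_inr_x s f k] at h
      rcases s <;> simp at h <;> omega
    · rw [hu, hv]
    · exfalso
      rw [hu, rk_inr_y s f k hxy, hv, rk_inr_z s f k hxz hyz] at h
      rcases s <;> simp at h <;> omega
    · exfalso
      rw [hu, rk_inr_y s f k hxy, rk_inr_N s f k hv] at h
      have := (f ⟨v, hv⟩).isLt
      rcases s <;> simp at h <;> omega
    · exfalso
      rw [hu, rk_inr_z s f k hxz hyz, hv, rk_inr_x s f k] at h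
      rcases s <;> simp at h <;> omega
    · exfalso
      rw [hu, rk_inr_z s f k hxz hyz, hv, rk_inr_y s f k hxy] at h
      rcases s <;> simp at h <;> omega
    · rw [hu, hv]
    · exfalso
      rw [hu, rk_inr_z s f k hxz hyz, rk_inr_N s f k hv] at h
      have := (f ⟨v, hv⟩).isLt
      rcases s <;> simp at h <;> omega
    · exfalso
      rw [rk_inr_N s f k hu, hv, rk_inr_x s f k] at h
      have := (f ⟨u, hu⟩).isLt
      omega
    · exfalso
      rw [rk_inr_N s f k hu, hv, rk_inr_y s f k hxy] at h
      have := (f ⟨u, hu⟩).isLt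
      rcases s <;> simp at h <;> omega
    · exfalso
      rw [rk_inr_N s f k hu, hv, rk_inr_z s f k hxz hyz] at h
      have := (f ⟨u, hu⟩).isLt
      rcases s <;> simp at h <;> omega
    · rw [rk_inr_N s f k hu, rk_inr_N s f k hv] at h
      have : (⟨u, hu⟩ : Nvtx x y z) = ⟨v, hv⟩ := f.injective (Fin.val_injective (by omega))
      exact congrArg Subtype.val this


/-- acyclicity from a rank function -/
lemma acyclic_of_rank {V : Type*} (ρ : V → ℕ) (D : V → V → Prop)
    (h : ∀ a b, D a b → ρ a < ρ b) : IsAcyclicRel D := by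
  intro a ha
  have : ∀ b c, Relation.TransGen D b c → ρ b < ρ c := by
    intro b c hbc
    induction hbc with
    | single h' => exact h _ _ h'
    | tail _ h' ih => exact ih.trans (h _ _ h')
  exact absurd (this a a ha) (lt_irrefl _)

lemma psi_valid {x y z : Fin p} (hxy : x ≠ y) (hxz : x ≠ z) (hyz : y ≠ z) (t : Tgt x y z) :
    (Gm x y z).IsOrientation (Psi x y z t) ∧ IsAcyclicRel (Psi x y z t)
      ∧ (Gm x y z).IsMoralOrient (Psi x y z t) := by
  refine ⟨⟨fun u v => ?_, fun u v => ?_⟩, ?_, ?_⟩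
  · constructor
    · intro h
      rcases lt_trichotomy (rk x y z t u) (rk x y z t v) with h' | h' | h'
      · exact Or.inl ⟨h, h'⟩
      · exact absurd (rk_inj hxy hxz hyz t h') h.ne
      · exact Or.inr ⟨h.symm, h'⟩
    · rintro (⟨h, -⟩ | ⟨h, -⟩); exact h; exact h.symm
  · rintro ⟨⟨-, h1⟩, ⟨-, h2⟩⟩; omega
  · exact acyclic_of_rank (rk x y z t) _ (fun a b h => h.2)
  · -- morality
    rintro a b c ⟨hac, hrac⟩ ⟨hbc, hrbc⟩ hab
    by_contra hnadj
    have hcase : (a = x ∧ b = y) ∨ (a = y ∧ b = x) ∨ (a = x ∧ b = z) ∨ (a = z ∧ b = x) := by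
      rw [Gm_adj] at hnadj; tauto
    have key : ∀ w : Fin p, (w = y ∨ w = z) → (Gm x y z).Adj x c → (Gm x y z).Adj w c →
        rk x y z t x < rk x y z t c → rk x y z t w < rk x y z t c → False := by
      intro w hw hxc hwc hr1 hr2
      have hcN : c ≠ x ∧ c ≠ y ∧ c ≠ z := by
        have := (Gm_adj x y z x c).mp hxc
        exact ⟨fun h => this.1 h.symm, fun h => this.2.1 ⟨rfl, h⟩, fun h => this.2.2.2.1 ⟨rfl, h⟩⟩
      rcases t with e | ⟨sb, f, k⟩
      · rw [rk_inl_x, rk_inl_S e hcN.1] at hr1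
        have := (e ⟨c, hcN.1⟩).isLt; omega
      · rw [rk_inr_N sb f k hcN] at hr2
        have hfc := (f ⟨c, hcN⟩).isLt
        rcases hw with rfl | rfl
        · rw [rk_inr_y sb f k hxy] at hr2; rcases sb <;> simp at hr2 <;> omega
        · rw [rk_inr_z sb f k hxz hyz] at hr2; rcases sb <;> simp at hr2 <;> omega
    rcases hcase with ⟨ha', hb'⟩ | ⟨ha', hb'⟩ | ⟨ha', hb'⟩ | ⟨ha', hb'⟩
    · exact key y (Or.inl rfl) (ha' ▸ hac) (hb' ▸ hbc) (ha' ▸ hrac) (hb' ▸ hrbc)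
    · exact key y (Or.inl rfl) (hb' ▸ hbc) (ha' ▸ hac) (hb' ▸ hrbc) (ha' ▸ hrac)
    · exact key z (Or.inr rfl) (ha' ▸ hac) (hb' ▸ hbc) (ha' ▸ hrac) (hb' ▸ hrbc)
    · exact key z (Or.inr rfl) (hb' ▸ hbc) (ha' ▸ hac) (hb' ▸ hrbc) (ha' ▸ hrac)

/-- uniqueness of order-equivalences to Fin -/
lemma equiv_fin_unique {α : Type*} {n : ℕ} (e1 e2 : α ≃ Fin n)
    (h : ∀ u v, e1 u < e1 v ↔ e2 u < e2 v) : e1 = e2 := by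
  have hg : StrictMono (e1.symm.trans e2) := by
    intro i j hij
    have := (h (e1.symm i) (e1.symm j)).mp (by simpa using hij)
    simpa using this
  have hrange : Set.range (e1.symm.trans e2) = Set.range (id : Fin n → Fin n) := by
    rw [(e1.symm.trans e2).surjective.range_eq, Set.range_id]
  have hid : (e1.symm.trans e2 : Fin n → Fin n) = id :=
    (hg.range_inj strictMono_id).mp hrange
  apply Equiv.ext
  intro u
  have := congrFun hid (e1 u)
  simp only [Equiv.trans_apply, Equiv.symm_apply_apply, id_eq] at this
  exact this.symm

lemma psi_lt_iff {x y z : Fin p} (t1 t2 : Tgt x y z) (h : Psi x y z t1 = Psi x y z t2)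
    {u v : Fin p} (hadj : (Gm x y z).Adj u v) :
    (rk x y z t1 u < rk x y z t1 v ↔ rk x y z t2 u < rk x y z t2 v) := by
  have h1 := congrFun (congrFun h u) v
  simp only [Psi, eq_iff_iff] at h1
  constructor
  · intro hlt; exact (h1.mp ⟨hadj, hlt⟩).2
  · intro hlt; exact (h1.mpr ⟨hadj, hlt⟩).2

lemma psi_inj {x y z : Fin p} (hxy : x ≠ y) (hxz : x ≠ z) (hyz : y ≠ z) :
    Function.Injective (Psi x y z) := by
  intro t1 t2 h
  have adjS : ∀ u v : Svtx x, u ≠ v → (Gm x y z).Adj u.1 v.1 := fun u v huv =>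
    Gm_adj_of x y z (fun hh => huv (Subtype.ext hh)) u.2 v.2
  have adjN : ∀ u v : Nvtx x y z, u ≠ v → (Gm x y z).Adj u.1 v.1 := fun u v huv =>
    Gm_adj_of x y z (fun hh => huv (Subtype.ext hh)) u.2.1 v.2.1
  rcases t1 with e1 | ⟨s1, f1, k1⟩ <;> rcases t2 with e2 | ⟨s2, f2, k2⟩
  · -- both inl
    congr 1
    apply equiv_fin_unique
    intro u v
    rcases eq_or_ne u v with rfl | huv
    · simp
    have := psi_lt_iff _ _ h (adjS u v huv)
    rw [rk_inl_S e1 u.2, rk_inl_S e1 v.2, rk_inl_S e2 u.2, rk_inl_S e2 v.2] at this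
    simp only [Subtype.coe_eta] at this
    constructor
    · intro hlt
      have := this.mp (by omega)
      omega
    · intro hlt
      have := this.mpr (by omega)
      omega
  · -- inl vs inr : contradiction
    exfalso
    set n0 : Nvtx x y z := f2.symm k2 with hn0
    have hadj : (Gm x y z).Adj x n0.1 := Gm_adj_x x y z n0.2.1 n0.2.2.1 n0.2.2.2
    have h2 : rk x y z (.inr (s2, f2, k2)) x < rk x y z (.inr (s2, f2, k2)) n0.1 := by
      rw [rk_inr_x, rk_inr_N s2 f2 k2 n0.2]
      have : f2 ⟨n0.1, n0.2⟩ = k2 := by rw [hn0]; simp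
      rw [this]; omega
    have h1 := (psi_lt_iff _ _ h hadj).mpr h2
    rw [rk_inl_x, rk_inl_S e1 n0.2.1] at h1
    have := (e1 ⟨n0.1, n0.2.1⟩).isLt; omega
  · -- inr vs inl
    exfalso
    set n0 : Nvtx x y z := f1.symm k1 with hn0
    have hadj : (Gm x y z).Adj x n0.1 := Gm_adj_x x y z n0.2.1 n0.2.2.1 n0.2.2.2
    have h2 : rk x y z (.inr (s1, f1, k1)) x < rk x y z (.inr (s1, f1, k1)) n0.1 := by
      rw [rk_inr_x, rk_inr_N s1 f1 k1 n0.2]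
      have : f1 ⟨n0.1, n0.2⟩ = k1 := by rw [hn0]; simp
      rw [this]; omega
    have h1 := (psi_lt_iff _ _ h hadj).mp h2
    rw [rk_inl_x, rk_inl_S e2 n0.2.1] at h1
    have := (e2 ⟨n0.1, n0.2.1⟩).isLt; omega
  · -- both inr
    have hadjyz : (Gm x y z).Adj y z := Gm_adj_of x y z hyz hxy.symm hxz.symm
    have hs : s1 = s2 := by
      have := psi_lt_iff _ _ h hadjyz
      rw [rk_inr_y s1 f1 k1 hxy, rk_inr_z s1 f1 k1 hxz hyz,
        rk_inr_y s2 f2 k2 hxy, rk_inr_z s2 f2 k2 hxz hyz] at this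
      cases s1 <;> cases s2 <;> simp_all
    subst hs
    have hf : f1 = f2 := by
      apply equiv_fin_unique
      intro u v
      rcases eq_or_ne u v with rfl | huv
      · simp
      have := psi_lt_iff _ _ h (adjN u v huv)
      rw [rk_inr_N s1 f1 k1 u.2, rk_inr_N s1 f1 k1 v.2,
        rk_inr_N s1 f2 k2 u.2, rk_inr_N s1 f2 k2 v.2] at this
      simp only [Subtype.coe_eta] at this
      constructor
      · intro hlt; have := this.mp (by omega); omega
      · intro hlt; have := this.mpr (by omega); omega
    subst hf
    have hk : k1 = k2 := by
      have key : ∀ i : Fin (p - 3), (k1 ≤ i ↔ k2 ≤ i) := by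
        intro i
        set n0 : Nvtx x y z := f1.symm i with hn0
        have hadj : (Gm x y z).Adj x n0.1 := Gm_adj_x x y z n0.2.1 n0.2.2.1 n0.2.2.2
        have := psi_lt_iff _ _ h hadj
        rw [rk_inr_x, rk_inr_x, rk_inr_N s1 f1 k1 n0.2, rk_inr_N s1 f1 k2 n0.2] at this
        have hfi : f1 ⟨n0.1, n0.2⟩ = i := by rw [hn0]; simp
        rw [hfi] at this
        constructor
        · intro h'
          have := this.mp (by simp only [Fin.le_def] at h' ⊢; omega)
          simp only [Fin.le_def]; omega
        · intro h'
          have := this.mpr (by simp only [Fin.le_def] at h' ⊢; omega)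
          simp only [Fin.le_def]; omega
      have h12 := (key k1).mp le_rfl
      have h21 := (key k2).mpr le_rfl
      exact le_antisymm h21 h12
    subst hk
    rfl

lemma order_equiv_of_sto {α : Type*} [Fintype α] {n : ℕ} (hcard : Fintype.card α = n)
    (r : α → α → Prop) (htri : ∀ u v, u = v ∨ r u v ∨ r v u)
    (hirr : ∀ u, ¬ r u u) (htr : ∀ u v w, r u v → r v w → r u w) :
    ∃ e : α ≃ Fin n, ∀ u v, r u v ↔ e u < e v := by
  classical
  letI : IsTrichotomous α r := ⟨fun u v => by rcases htri u v with h|h|h <;> tauto⟩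
  letI : IsTrans α r := ⟨htr⟩
  letI : IsIrrefl α r := ⟨hirr⟩
  letI : IsStrictTotalOrder α r := {}
  letI lo := linearOrderOfSTO r
  let e0 := Fintype.orderIsoFinOfCardEq α hcard
  refine ⟨e0.symm.toEquiv, fun u v => ?_⟩
  have : e0.symm u < e0.symm v ↔ u < v := e0.symm.lt_iff_lt
  rw [show (e0.symm.toEquiv : α → Fin n) = (e0.symm : α → Fin n) from rfl]
  rw [this]
  exact Iff.rfl

lemma cardS (x : Fin p) : Fintype.card (Svtx x) = p - 1 := by
  simp [Fintype.card_subtype_compl]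

lemma cardN {x y z : Fin p} (hxy : x ≠ y) (hxz : x ≠ z) (hyz : y ≠ z) :
    Fintype.card (Nvtx x y z) = p - 3 := by
  classical
  rw [Fintype.card_subtype]
  have heq : (Finset.univ.filter fun v : Fin p => v ≠ x ∧ v ≠ y ∧ v ≠ z)
      = Finset.univ \ {x, y, z} := by
    ext v
    simp only [Finset.mem_filter, Finset.mem_univ, true_and, Finset.mem_sdiff,
      Finset.mem_insert, Finset.mem_singleton]
    tauto
  rw [heq, Finset.card_sdiff_of_subset (Finset.subset_univ _)]
  have h3 : ({x, y, z} : Finset (Fin p)).card = 3 := by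
    rw [Finset.card_insert_of_notMem (by simp [hxy, hxz]),
      Finset.card_insert_of_notMem (by simp [hyz]), Finset.card_singleton]
  rw [h3, Finset.card_univ, Fintype.card_fin]

lemma psi_surj {x y z : Fin p} (hp : 4 ≤ p) (hxy : x ≠ y) (hxz : x ≠ z) (hyz : y ≠ z)
    (D : Fin p → Fin p → Prop) (hor : (Gm x y z).IsOrientation D)
    (hac : IsAcyclicRel D) (hmo : (Gm x y z).IsMoralOrient D) :
    ∃ t : Tgt x y z, Psi x y z t = D := by
  classical
  have hDadj : ∀ {u v}, D u v → (Gm x y z).Adj u v := fun {u v} h => (hor.1 u v).mpr (Or.inl h)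
  have hasym : ∀ {u v}, D u v → ¬ D v u := fun {u v} h h' => hor.2 u v ⟨h, h'⟩
  have hirr : ∀ u, ¬ D u u := fun u h => hasym h h
  have htot : ∀ {u v}, (Gm x y z).Adj u v → D u v ∨ D v u := fun {u v} h => (hor.1 u v).mp h
  have htrans : ∀ {u v w}, D u v → D v w → (Gm x y z).Adj u w → D u w := by
    intro u v w h1 h2 hadj
    rcases htot hadj with h | h
    · exact h
    · exact absurd (Relation.TransGen.head h1 (Relation.TransGen.head h2
        (Relation.TransGen.single h))) (hac u)
  obtain ⟨e, he⟩ := order_equiv_of_sto (cardS x) (fun u v : Svtx x => D u.1 v.1)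
    (fun u v => by
      rcases eq_or_ne u v with h | h
      · exact Or.inl h
      · exact Or.inr (htot (Gm_adj_of x y z (fun hh => h (Subtype.ext hh)) u.2 v.2)))
    (fun u => hirr u.1)
    (fun u v w h1 h2 => by
      rcases eq_or_ne u w with rfl | h
      · exact absurd h1 (hasym h2)
      · exact htrans h1 h2 (Gm_adj_of x y z (fun hh => h (Subtype.ext hh)) u.2 w.2))
  by_cases hall : ∀ n : Nvtx x y z, D n.1 x
  · -- all neighbors point into x
    refine ⟨.inl e, ?_⟩
    funext u v
    apply propext
    have hloop : ∀ w : Fin p, ¬ (Gm x y z).Adj w w := fun w => (Gm x y z).loopless.irrefl w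
    constructor
    · rintro ⟨hadj, hlt⟩
      rcases eq_or_ne u x with hu | hu <;> rcases eq_or_ne v x with hv | hv
      · exact absurd hadj (by rw [hu, hv]; exact hloop x)
      · exfalso
        rw [hu, rk_inl_x, rk_inl_S e hv] at hlt
        have := (e ⟨v, hv⟩).isLt; omega
      · have hu' : u ≠ y ∧ u ≠ z := by
          rw [hv, Gm_adj] at hadj
          exact ⟨fun h => hadj.2.2.1 ⟨h, rfl⟩, fun h => hadj.2.2.2.2 ⟨h, rfl⟩⟩
        rw [hv]
        exact hall ⟨u, hu, hu'.1, hu'.2⟩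
      · rw [rk_inl_S e hu, rk_inl_S e hv] at hlt
        exact (he ⟨u, hu⟩ ⟨v, hv⟩).mpr (by simp only [Fin.lt_def]; omega)
    · intro hD
      have hadj := hDadj hD
      refine ⟨hadj, ?_⟩
      rcases eq_or_ne u x with hu | hu <;> rcases eq_or_ne v x with hv | hv
      · exact absurd hadj (by rw [hu, hv]; exact hloop x)
      · exfalso
        have hv' : v ≠ y ∧ v ≠ z := by
          rw [hu, Gm_adj] at hadj
          exact ⟨fun h => hadj.2.1 ⟨rfl, h⟩, fun h => hadj.2.2.2.1 ⟨rfl, h⟩⟩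
        rw [hu] at hD
        exact hasym hD (hall ⟨v, hv, hv'.1, hv'.2⟩)
      · rw [hv, rk_inl_S e hu, rk_inl_x]
        have := (e ⟨u, hu⟩).isLt; omega
      · rw [rk_inl_S e hu, rk_inl_S e hv]
        have := (he ⟨u, hu⟩ ⟨v, hv⟩).mp hD
        simp only [Fin.lt_def] at this; omega
  · -- not all neighbors point into x
    push_neg at hall
    obtain ⟨n0, hn0⟩ := hall
    have hxn0 : D x n0.1 :=
      (htot (Gm_adj_x x y z n0.2.1 n0.2.2.1 n0.2.2.2)).resolve_right hn0
    have hadjNy : ∀ n : Nvtx x y z, (Gm x y z).Adj n.1 y :=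
      fun n => Gm_adj_of x y z n.2.2.1 n.2.1 hxy.symm
    have hadjNz : ∀ n : Nvtx x y z, (Gm x y z).Adj n.1 z :=
      fun n => Gm_adj_of x y z n.2.2.2 n.2.1 hxz.symm
    have hout : ∀ n : Nvtx x y z, D x n.1 → D n.1 y ∧ D n.1 z := by
      intro n h
      constructor
      · refine (htot (hadjNy n)).resolve_right fun h' => ?_
        exact Gm_not_adj_xy x y z (hmo x y n.1 h h' hxy)
      · refine (htot (hadjNz n)).resolve_right fun h' => ?_
        exact Gm_not_adj_xz x y z (hmo x z n.1 h h' hxz)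
    have hNyz : ∀ n : Nvtx x y z, D n.1 y ∧ D n.1 z := by
      intro n
      rcases htot (Gm_adj_x x y z n.2.1 n.2.2.1 n.2.2.2) with h | h
      · exact hout n h
      · constructor
        · refine (htot (hadjNy n)).resolve_right fun h' => ?_
          exact hac y (Relation.TransGen.head h' (Relation.TransGen.head h
            (Relation.TransGen.head hxn0 (Relation.TransGen.single (hout n0 hxn0).1))))
        · refine (htot (hadjNz n)).resolve_right fun h' => ?_
          exact hac z (Relation.TransGen.head h' (Relation.TransGen.head h
            (Relation.TransGen.head hxn0 (Relation.TransGen.single (hout n0 hxn0).2))))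
    set inc : Nvtx x y z → Svtx x := fun n => ⟨n.1, n.2.1⟩ with hinc
    set Y : Svtx x := ⟨y, hxy.symm⟩ with hY
    set Z : Svtx x := ⟨z, hxz.symm⟩ with hZ
    have hincinj : Function.Injective inc := fun n m h =>
      Subtype.ext (congrArg (fun w : Svtx x => w.1) h)
    have hordy : ∀ n : Nvtx x y z, (e (inc n)).val < (e Y).val := by
      intro n
      exact Fin.lt_def.mp ((he (inc n) Y).mp (hNyz n).1)
    have hordz : ∀ n : Nvtx x y z, (e (inc n)).val < (e Z).val := by
      intro n
      exact Fin.lt_def.mp ((he (inc n) Z).mp (hNyz n).2)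
    have hcards : Fintype.card (Nvtx x y z) = p - 3 := cardN hxy hxz hyz
    have himginj : Function.Injective (fun n : Nvtx x y z => (e (inc n)).val) :=
      fun n m h => hincinj (e.injective (Fin.val_injective h))
    have hbound : ∀ m : ℕ, (∀ n : Nvtx x y z, (e (inc n)).val < m) → p - 3 ≤ m := by
      intro m hm
      have hsub : Finset.univ.image (fun n : Nvtx x y z => (e (inc n)).val)
          ⊆ Finset.range m := by
        intro i hi
        rw [Finset.mem_image] at hi
        obtain ⟨n, -, rfl⟩ := hi
        exact Finset.mem_range.mpr (hm n)
      have := Finset.card_le_card hsub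
      rwa [Finset.card_image_of_injective _ himginj, Finset.card_univ, hcards,
        Finset.card_range] at this
    have hey : p - 3 ≤ (e Y).val := hbound _ hordy
    have hez : p - 3 ≤ (e Z).val := hbound _ hordz
    have heyz : (e Y).val ≠ (e Z).val := fun h =>
      hyz (congrArg Subtype.val (e.injective (Fin.val_injective h)))
    have heylt : (e Y).val < p - 1 := (e Y).isLt
    have hezlt : (e Z).val < p - 1 := (e Z).isLt
    have hmin : ∀ n : Nvtx x y z, (e (inc n)).val < p - 3 := by
      intro n
      have h1 := hordy n
      have h2 := hordz n
      omega
    set g : Nvtx x y z → Fin (p - 3) := fun n => ⟨(e (inc n)).val, hmin n⟩ with hg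
    have hginj : Function.Injective g := fun n m h =>
      himginj (by simpa [hg] using congrArg Fin.val h)
    have hgsurj : Function.Surjective g := by
      intro i
      have hilt : i.val < p - 1 := by have := i.isLt; omega
      set w : Svtx x := e.symm ⟨i.val, hilt⟩ with hw
      have hew : (e w).val = i.val := by rw [hw, Equiv.apply_symm_apply]
      have hwy : w.1 ≠ y := by
        intro h
        have hwY : w = Y := Subtype.ext h
        rw [hwY] at hew
        have := i.isLt
        omega
      have hwz : w.1 ≠ z := by
        intro h
        have hwZ : w = Z := Subtype.ext h
        rw [hwZ] at hew
        have := i.isLt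
        omega
      refine ⟨⟨w.1, w.2, hwy, hwz⟩, ?_⟩
      apply Fin.ext
      show (e (inc ⟨w.1, w.2, hwy, hwz⟩)).val = i.val
      have h5 : inc ⟨w.1, w.2, hwy, hwz⟩ = w := Subtype.ext rfl
      rw [h5, hew]
    set f : Nvtx x y z ≃ Fin (p - 3) := Equiv.ofBijective g ⟨hginj, hgsurj⟩ with hf
    have hfval : ∀ n : Nvtx x y z, (f n).val = (e (inc n)).val := fun n => rfl
    have hford : ∀ n m : Nvtx x y z, D n.1 m.1 ↔ (f n).val < (f m).val := by
      intro n m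
      rw [hfval, hfval]
      exact (he (inc n) (inc m)).trans Fin.lt_def
    set I : Finset (Nvtx x y z) := Finset.univ.filter (fun n => D n.1 x) with hI
    set k0 : ℕ := I.card with hk0def
    have hk0 : k0 < p - 3 := by
      have hne : I ≠ Finset.univ := by
        intro h
        have : n0 ∈ I := h ▸ Finset.mem_univ n0
        rw [hI, Finset.mem_filter] at this
        exact hn0 this.2
      have := Finset.card_lt_card ((Finset.ssubset_univ_iff).mpr hne)
      rwa [Finset.card_univ, hcards] at this
    have hIseg : ∀ n : Nvtx x y z, D n.1 x ↔ (f n).val < k0 := by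
      set J2 : Finset ℕ := I.image (fun n => (f n).val) with hJ2
      have hful : Function.Injective (fun n : Nvtx x y z => (f n).val) :=
        fun n m h => hginj (Fin.val_injective h)
      have hcardJ2 : J2.card = k0 := by
        rw [hJ2, Finset.card_image_of_injective _ hful]
      have hdown : ∀ j ∈ J2, ∀ i, i < j → i ∈ J2 := by
        intro j hj i hij
        rw [hJ2, Finset.mem_image] at hj
        obtain ⟨n, hnI, rfl⟩ := hj
        have hilt : i < p - 3 := lt_trans hij (f n).isLt
        obtain ⟨m, hm⟩ := hgsurj ⟨i, hilt⟩
        have hfm : (f m).val = i := congrArg Fin.val hm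
        have hDmn : D m.1 n.1 := (hford m n).mpr (by omega)
        have hDnx : D n.1 x := by
          rw [hI, Finset.mem_filter] at hnI; exact hnI.2
        have hDmx : D m.1 x :=
          htrans hDmn hDnx ((Gm_adj_x x y z m.2.1 m.2.2.1 m.2.2.2).symm)
        rw [hJ2, Finset.mem_image]
        exact ⟨m, by rw [hI, Finset.mem_filter]; exact ⟨Finset.mem_univ m, hDmx⟩, hfm⟩
      have hsub : J2 ⊆ Finset.range k0 := by
        intro j hj
        rw [Finset.mem_range]
        by_contra h
        push_neg at h
        have : Finset.range (j + 1) ⊆ J2 := by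
          intro i hi
          rw [Finset.mem_range] at hi
          rcases Nat.lt_succ_iff_lt_or_eq.mp hi with h' | rfl
          · exact hdown j hj i h'
          · exact hj
        have := Finset.card_le_card this
        rw [Finset.card_range, hcardJ2] at this
        omega
      have hJeq : J2 = Finset.range k0 :=
        Finset.eq_of_subset_of_card_le hsub (by rw [Finset.card_range, hcardJ2])
      intro n
      constructor
      · intro h
        have : (f n).val ∈ J2 := by
          rw [hJ2, Finset.mem_image]
          exact ⟨n, by rw [hI, Finset.mem_filter]; exact ⟨Finset.mem_univ n, h⟩, rfl⟩
        rw [hJeq, Finset.mem_range] at this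
        exact this
      · intro h
        have : (f n).val ∈ J2 := by rw [hJeq, Finset.mem_range]; exact h
        rw [hJ2, Finset.mem_image] at this
        obtain ⟨m, hmI, hfm⟩ := this
        have : m = n := hful hfm
        rw [← this]
        rw [hI, Finset.mem_filter] at hmI
        exact hmI.2
    set sb : Bool := decide (D y z) with hsb
    have hsbt : sb = true ↔ D y z := by rw [hsb]; exact decide_eq_true_iff
    have hDyz_or : D y z ∨ D z y := htot (Gm_adj_of x y z hyz hxy.symm hxz.symm)
    set k : Fin (p - 3) := ⟨k0, hk0⟩ with hkdef
    have hkval : k.val = k0 := rfl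
    refine ⟨.inr (sb, f, k), ?_⟩
    funext u v
    apply propext
    rw [Iff.comm]
    have rkx := rk_inr_x sb f k (x := x) (y := y) (z := z)
    have rky := rk_inr_y sb f k hxy
    have rkz := rk_inr_z sb f k hxz hyz
    rcases vtx_cases x y z u with hu | hu | hu | hu <;>
      rcases vtx_cases x y z v with hv | hv | hv | hv
    · -- x x
      rw [hu, hv]
      constructor
      · intro h; exact absurd h (hirr x)
      · rintro ⟨hadj, -⟩; exact absurd hadj ((Gm x y z).loopless.irrefl x)
    · -- x y
      rw [hu, hv]
      constructor
      · intro h; exact absurd (hDadj h) (Gm_not_adj_xy x y z)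
      · rintro ⟨hadj, -⟩; exact absurd hadj (Gm_not_adj_xy x y z)
    · -- x z
      rw [hu, hv]
      constructor
      · intro h; exact absurd (hDadj h) (Gm_not_adj_xz x y z)
      · rintro ⟨hadj, -⟩; exact absurd hadj (Gm_not_adj_xz x y z)
    · -- x n
      rw [hu]
      constructor
      · intro h
        have hnvx : ¬ D v x := hasym h
        have : ¬ ((f ⟨v, hv⟩).val < k0) := fun hh => hnvx ((hIseg ⟨v, hv⟩).mpr hh)
        refine ⟨Gm_adj_x x y z hv.1 hv.2.1 hv.2.2, ?_⟩
        rw [rkx, rk_inr_N sb f k hv, hkval]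
        omega
      · rintro ⟨hadj, hlt⟩
        rw [rkx, rk_inr_N sb f k hv, hkval] at hlt
        have hnvx : ¬ D v x := fun hD => by
          have := (hIseg ⟨v, hv⟩).mp hD; omega
        exact (htot (Gm_adj_x x y z hv.1 hv.2.1 hv.2.2)).resolve_right hnvx
    · -- y x
      rw [hu, hv]
      constructor
      · intro h; exact absurd (hDadj h) (fun hh => Gm_not_adj_xy x y z hh.symm)
      · rintro ⟨hadj, -⟩; exact absurd hadj (fun hh => Gm_not_adj_xy x y z hh.symm)
    · -- y y
      rw [hu, hv]
      constructor
      · intro h; exact absurd h (hirr y)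
      · rintro ⟨hadj, -⟩; exact absurd hadj ((Gm x y z).loopless.irrefl y)
    · -- y z
      rw [hu, hv]
      constructor
      · intro h
        have hs : sb = true := hsbt.mpr h
        refine ⟨Gm_adj_of x y z hyz hxy.symm hxz.symm, ?_⟩
        rw [rky, rkz, hs]
        have h2 : (2 * p : ℕ) < 2 * p + 2 := by omega
        simpa using h2
      · rintro ⟨hadj, hlt⟩
        rw [rky, rkz] at hlt
        cases hsb2 : sb with
        | false => rw [hsb2] at hlt; exact absurd hlt (by simp)
        | true => exact hsbt.mp hsb2
    · -- y n
      rw [hu]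
      constructor
      · intro h
        exact absurd h (hasym (hNyz ⟨v, hv⟩).1)
      · rintro ⟨hadj, hlt⟩
        rw [rky, rk_inr_N sb f k hv] at hlt
        have := (f ⟨v, hv⟩).isLt
        exfalso
        rcases hsb' : sb with _ | _ <;> rw [hsb'] at hlt <;> simp at hlt <;> omega
    · -- z x
      rw [hu, hv]
      constructor
      · intro h; exact absurd (hDadj h) (fun hh => Gm_not_adj_xz x y z hh.symm)
      · rintro ⟨hadj, -⟩; exact absurd hadj (fun hh => Gm_not_adj_xz x y z hh.symm)
    · -- z y
      rw [hu, hv]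
      constructor
      · intro h
        have hs : sb = false := by
          rcases hDyz_or with hh | hh
          · exact absurd h (hasym hh)
          · rcases hsb' : sb with _ | _
            · rfl
            · exact absurd (hsbt.mp hsb') (hasym h)
        refine ⟨(Gm_adj_of x y z hyz hxy.symm hxz.symm).symm, ?_⟩
        rw [rky, rkz, hs]
        have h2 : (2 * p : ℕ) < 2 * p + 2 := by omega
        simpa using h2
      · rintro ⟨hadj, hlt⟩
        rw [rky, rkz] at hlt
        have hs : ¬ D y z := by
          intro hh
          rw [hsbt.mpr hh] at hlt
          exact absurd hlt (by simp)
        exact hDyz_or.resolve_left hs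
    · -- z z
      rw [hu, hv]
      constructor
      · intro h; exact absurd h (hirr z)
      · rintro ⟨hadj, -⟩; exact absurd hadj ((Gm x y z).loopless.irrefl z)
    · -- z n
      rw [hu]
      constructor
      · intro h
        exact absurd h (hasym (hNyz ⟨v, hv⟩).2)
      · rintro ⟨hadj, hlt⟩
        rw [rkz, rk_inr_N sb f k hv] at hlt
        have := (f ⟨v, hv⟩).isLt
        exfalso
        rcases hsb' : sb with _ | _ <;> rw [hsb'] at hlt <;> simp at hlt <;> omega
    · -- n x
      rw [hv]
      constructor
      · intro h
        have := (hIseg ⟨u, hu⟩).mp h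
        refine ⟨(Gm_adj_x x y z hu.1 hu.2.1 hu.2.2).symm, ?_⟩
        rw [rkx, rk_inr_N sb f k hu, hkval]
        omega
      · rintro ⟨hadj, hlt⟩
        rw [rkx, rk_inr_N sb f k hu, hkval] at hlt
        exact (hIseg ⟨u, hu⟩).mpr (by omega)
    · -- n y
      rw [hv]
      constructor
      · intro h
        refine ⟨hadjNy ⟨u, hu⟩, ?_⟩
        rw [rky, rk_inr_N sb f k hu]
        have := (f ⟨u, hu⟩).isLt
        rcases sb with _ | _ <;> simp <;> omega
      · rintro ⟨-, -⟩
        exact (hNyz ⟨u, hu⟩).1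
    · -- n z
      rw [hv]
      constructor
      · intro h
        refine ⟨hadjNz ⟨u, hu⟩, ?_⟩
        rw [rkz, rk_inr_N sb f k hu]
        have := (f ⟨u, hu⟩).isLt
        rcases sb with _ | _ <;> simp <;> omega
      · rintro ⟨-, -⟩
        exact (hNyz ⟨u, hu⟩).2
    · -- n m
      constructor
      · intro h
        have := (hford ⟨u, hu⟩ ⟨v, hv⟩).mp h
        refine ⟨hDadj h, ?_⟩
        rw [rk_inr_N sb f k hu, rk_inr_N sb f k hv]
        omega
      · rintro ⟨hadj, hlt⟩
        rw [rk_inr_N sb f k hu, rk_inr_N sb f k hv] at hlt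
        exact (hford ⟨u, hu⟩ ⟨v, hv⟩).mpr (by omega)

lemma main_count {x y z : Fin p} (hp : 4 ≤ p) (hxy : x ≠ y) (hxz : x ≠ z) (hyz : y ≠ z) :
    moralAcyclicCount (Gm x y z) = (p ^ 2 - p - 4) * Nat.factorial (p - 3) := by
  classical
  have hset : {D : Fin p → Fin p → Prop |
      (Gm x y z).IsOrientation D ∧ IsAcyclicRel D ∧ (Gm x y z).IsMoralOrient D}
      = Set.range (Psi x y z) := by
    ext D
    constructor
    · rintro ⟨h1, h2, h3⟩
      obtain ⟨t, ht⟩ := psi_surj hp hxy hxz hyz D h1 h2 h3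
      exact ⟨t, ht⟩
    · rintro ⟨t, rfl⟩
      exact psi_valid hxy hxz hyz t
  rw [moralAcyclicCount, hset, ← Set.image_univ,
    Set.ncard_image_of_injective _ (psi_inj hxy hxz hyz), Set.ncard_univ,
    Nat.card_eq_fintype_card]
  have hc1 : Fintype.card (Svtx x ≃ Fin (p - 1)) = Nat.factorial (p - 1) := by
    rw [Fintype.card_equiv (Fintype.equivFinOfCardEq (cardS x)), cardS]
  have hc2 : Fintype.card (Nvtx x y z ≃ Fin (p - 3)) = Nat.factorial (p - 3) := by
    rw [Fintype.card_equiv (Fintype.equivFinOfCardEq (cardN hxy hxz hyz)), cardN hxy hxz hyz]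
  have hcard : Fintype.card (Tgt x y z)
      = Nat.factorial (p - 1) + 2 * (Nat.factorial (p - 3) * (p - 3)) := by
    rw [show Fintype.card (Tgt x y z) = Fintype.card (Svtx x ≃ Fin (p - 1))
        + Fintype.card (Bool × (Nvtx x y z ≃ Fin (p - 3)) × Fin (p - 3)) from
      Fintype.card_sum]
    rw [Fintype.card_prod, Fintype.card_prod, Fintype.card_bool, Fintype.card_fin, hc1, hc2]
  rw [hcard]
  obtain ⟨q, rfl⟩ : ∃ q, p = q + 4 := ⟨p - 4, by omega⟩
  have h1 : q + 4 - 1 = q + 3 := by omega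
  have h2 : q + 4 - 3 = q + 1 := by omega
  rw [h1, h2]
  have h3 : (q + 4) ^ 2 - (q + 4) - 4 = q ^ 2 + 7 * q + 8 := by
    have : (q + 4) ^ 2 = q ^ 2 + 8 * q + 16 := by ring
    omega
  rw [h3]
  rw [show q + 3 = (q + 2) + 1 from rfl, Nat.factorial_succ,
    show q + 2 = (q + 1) + 1 from rfl, Nat.factorial_succ]
  ring

section NonChordal

variable {p : ℕ} (a b c d : Fin p)

lemma G2_adj (u v : Fin p) :
    ((⊤ : SimpleGraph (Fin p)) \ SimpleGraph.fromEdgeSet {s(a, b), s(c, d)}).Adj u v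
      ↔ u ≠ v ∧ s(u, v) ≠ s(a, b) ∧ s(u, v) ≠ s(c, d) := by
  simp only [SimpleGraph.sdiff_adj, SimpleGraph.top_adj, SimpleGraph.fromEdgeSet_adj,
    Set.mem_insert_iff, Set.mem_singleton_iff]
  tauto

lemma not_chordal_of_disjoint (hab : a ≠ b) (hcd : c ≠ d) (hac : a ≠ c) (had : a ≠ d)
    (hbc : b ≠ c) (hbd : b ≠ d) :
    ¬ ((⊤ : SimpleGraph (Fin p)) \
        SimpleGraph.fromEdgeSet {s(a, b), s(c, d)}).IsChordalGraph := by
  intro hch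
  set G := (⊤ : SimpleGraph (Fin p)) \ SimpleGraph.fromEdgeSet {s(a, b), s(c, d)} with hG
  have adj_ac : G.Adj a c := by
    rw [hG, G2_adj]
    refine ⟨hac, ?_, ?_⟩ <;> (intro h; rw [Sym2.eq_iff] at h; tauto)
  have adj_cb : G.Adj c b := by
    rw [hG, G2_adj]
    refine ⟨hbc.symm, ?_, ?_⟩ <;> (intro h; rw [Sym2.eq_iff] at h; tauto)
  have adj_bd : G.Adj b d := by
    rw [hG, G2_adj]
    refine ⟨hbd, ?_, ?_⟩ <;> (intro h; rw [Sym2.eq_iff] at h; tauto)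
  have adj_da : G.Adj d a := by
    rw [hG, G2_adj]
    refine ⟨had.symm, ?_, ?_⟩ <;> (intro h; rw [Sym2.eq_iff] at h; tauto)
  set W : G.Walk a a :=
    .cons adj_ac (.cons adj_cb (.cons adj_bd (.cons adj_da .nil))) with hW
  have hcyc : W.IsCycle := by
    rw [SimpleGraph.Walk.isCycle_def]
    refine ⟨?_, ?_, ?_⟩
    · rw [SimpleGraph.Walk.isTrail_def, hW]
      simp only [SimpleGraph.Walk.edges_cons, SimpleGraph.Walk.edges_nil,
        List.nodup_cons, List.mem_cons, List.not_mem_nil, List.nodup_nil, Sym2.eq_iff]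
      push_neg
      tauto
    · rw [hW]; simp
    · rw [hW]
      simp only [SimpleGraph.Walk.support_cons, SimpleGraph.Walk.support_nil,
        List.tail_cons, List.nodup_cons, List.mem_cons, List.not_mem_nil, List.nodup_nil]
      push_neg
      tauto
  have hlen : 4 ≤ W.length := by rw [hW]; simp
  obtain ⟨u, v, hu, hv, hadj, hne⟩ := hch a W hcyc hlen
  have hu' : u = a ∨ u = c ∨ u = b ∨ u = d := by
    rw [hW] at hu
    simp at hu
    tauto
  have hv' : v = a ∨ v = c ∨ v = b ∨ v = d := by
    rw [hW] at hv
    simp at hv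
    tauto
  rw [hW] at hne
  simp only [SimpleGraph.Walk.edges_cons, SimpleGraph.Walk.edges_nil, List.mem_cons,
    List.not_mem_nil, or_false] at hne
  push_neg at hne
  obtain ⟨hn1, hn2, hn3, hn4⟩ := hne
  rw [hG, G2_adj] at hadj
  obtain ⟨huv, hne_ab, hne_cd⟩ := hadj
  rcases hu' with rfl | rfl | rfl | rfl <;> rcases hv' with rfl | rfl | rfl | rfl <;>
    first
    | exact huv rfl
    | exact hn1 rfl
    | exact hn1 Sym2.eq_swap
    | exact hn2 rfl
    | exact hn2 Sym2.eq_swap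
    | exact hn3 rfl
    | exact hn3 Sym2.eq_swap
    | exact hn4 rfl
    | exact hn4 Sym2.eq_swap
    | exact hne_ab rfl
    | exact hne_ab Sym2.eq_swap
    | exact hne_cd rfl
    | exact hne_cd Sym2.eq_swap

end NonChordal

theorem count_complete_minus_two_edges (p : ℕ) (hp : 4 ≤ p) (a b c d : Fin p)
    (hab : a ≠ b) (hcd : c ≠ d) (hne : s(a, b) ≠ s(c, d))
    (hchord : ((⊤ : SimpleGraph (Fin p)) \
        SimpleGraph.fromEdgeSet {s(a, b), s(c, d)}).IsChordalGraph) :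
    moralAcyclicCount ((⊤ : SimpleGraph (Fin p)) \
        SimpleGraph.fromEdgeSet {s(a, b), s(c, d)})
      = (p ^ 2 - p - 4) * Nat.factorial (p - 3) := by
  by_cases h1 : a = c
  · subst h1
    have hbd : b ≠ d := fun h => hne (by rw [h])
    exact main_count hp hab hcd hbd
  · by_cases h2 : a = d
    · subst h2
      have hbc : b ≠ c := fun h => hne (by rw [h]; exact Sym2.eq_swap)
      rw [show s(c, a) = s(a, c) from Sym2.eq_swap]
      exact main_count hp hab hcd.symm hbc
    · by_cases h3 : b = c
      · subst h3
        have had : a ≠ d := fun h => hne (by rw [h]; exact Sym2.eq_swap)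
        rw [show s(a, b) = s(b, a) from Sym2.eq_swap]
        exact main_count hp hab.symm hcd had
      · by_cases h4 : b = d
        · subst h4
          have hac : a ≠ c := fun h => hne (by rw [h])
          rw [show s(a, b) = s(b, a) from Sym2.eq_swap,
            show s(c, b) = s(b, c) from Sym2.eq_swap]
          exact main_count hp hab.symm hcd.symm hac
        · exact absurd hchord (not_chordal_of_disjoint a b c d hab hcd h1 h2 h3 h4)
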